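/- Let n ≥ 3 and let Δ be a triangulation of [n]. Let 𝕌_Δ be the subgroup of 𝕋_Δ generated by the elements u_{ij}^k := t_{ki}⁻¹t_{kj} for all i,j,k ∈ [n] with (k,i),(k,j) ∈ Δ. Then 𝕌_Δ is isomorphic to the free group on 2n−4 generators. -/

import Mathlib

open scoped Classical

noncomputable section

namespace NCPolygon

/-- Cyclic successor on `Fin n` (the vertices of the `n`-gon in cyclic order). -/
def csucc {n : ℕ} (i : Fin n) : Fin n :=
  ⟨(i.1 + 1) % n, Nat.mod_lt _ (Nat.lt_of_le_of_lt (Nat.zero_le _) i.isLt)⟩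

/-- Cyclic predecessor on `Fin n`. -/
def cpred {n : ℕ} (i : Fin n) : Fin n :=
  ⟨(i.1 + (n - 1)) % n, Nat.mod_lt _ (Nat.lt_of_le_of_lt (Nat.zero_le _) i.isLt)⟩

/-- A list of elements of `Fin n` is *cyclic* if its entries are distinct and some
cyclic rotation of it is strictly increasing. -/
def IsCyclicSeq {n : ℕ} (l : List (Fin n)) : Prop :=
  l.Nodup ∧ ∃ k : ℕ, (l.rotate k).Pairwise (· < ·)

/-- The pair `(i,k)` crosses `(j,l)` iff `(i,j,k,l)` is cyclic. -/
def Crosses {n : ℕ} (p q : Fin n × Fin n) : Prop :=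
  IsCyclicSeq [p.1, q.1, p.2, q.2]

def NonCrossing {n : ℕ} (Δ : Set (Fin n × Fin n)) : Prop :=
  (∀ p ∈ Δ, p.1 ≠ p.2) ∧ ∀ p ∈ Δ, ∀ q ∈ Δ, ¬ Crosses p q

/-- A triangulation of the `n`-gon: a maximal crossing-free set of (directed) chords. -/
def IsTriangulation {n : ℕ} (Δ : Set (Fin n × Fin n)) : Prop :=
  NonCrossing Δ ∧ ∀ Δ' : Set (Fin n × Fin n), NonCrossing Δ' → Δ ⊆ Δ' → Δ' = Δ

/-! ### The noncommutative polygon algebra `𝒜_n` -/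

abbrev OffD (n : ℕ) := {p : Fin n × Fin n // p.1 ≠ p.2}

abbrev AGen (n : ℕ) := OffD n ⊕ OffD n

def xF {n : ℕ} (i j : Fin n) : FreeAlgebra ℚ (AGen n) :=
  if h : i ≠ j then FreeAlgebra.ι ℚ (Sum.inl ⟨(i, j), h⟩) else 1

def xiF {n : ℕ} (i j : Fin n) : FreeAlgebra ℚ (AGen n) :=
  if h : i ≠ j then FreeAlgebra.ι ℚ (Sum.inr ⟨(i, j), h⟩) else 1

/-- The defining relations of `𝒜_n`: invertibility, triangle, and exchange relations. -/
inductive ARel (n : ℕ) : FreeAlgebra ℚ (AGen n) → FreeAlgebra ℚ (AGen n) → Prop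
  | mul_inv {i j : Fin n} (h : i ≠ j) : ARel n (xF i j * xiF i j) 1
  | inv_mul {i j : Fin n} (h : i ≠ j) : ARel n (xiF i j * xF i j) 1
  | triangle {i j k : Fin n} (hij : i ≠ j) (hik : i ≠ k) (hjk : j ≠ k) :
      ARel n (xF i j * xiF k j * xF k i) (xF i k * xiF j k * xF j i)
  | exchange {i j k l : Fin n} (h : IsCyclicSeq [i, j, k, l]) :
      ARel n (xF j l) (xF j k * xiF i k * xF i l + xF j i * xiF k i * xF k l)

/-- The noncommutative `n`-gon algebra `𝒜_n`. -/
abbrev NCPoly (n : ℕ) := RingQuot (ARel n)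

/-- The generator `x_{ij} ∈ 𝒜_n` (junk value `1` when `i = j`). -/
def X {n : ℕ} (i j : Fin n) : NCPoly n :=
  RingQuot.mkAlgHom ℚ (ARel n) (xF i j)

/-- The generator `x_{ij}⁻¹ ∈ 𝒜_n`. -/
def Xinv {n : ℕ} (i j : Fin n) : NCPoly n :=
  RingQuot.mkAlgHom ℚ (ARel n) (xiF i j)

/-- The noncommutative angle `T_i^{jk} = x_{ji}⁻¹ x_{jk} x_{ik}⁻¹ ∈ 𝒜_n`. -/
def Tang {n : ℕ} (i j k : Fin n) : NCPoly n := Xinv j i * X j k * Xinv i k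

/-! ### Triangle groups -/

def tF {n : ℕ} (Δ : Set (Fin n × Fin n)) (i j : Fin n) : FreeGroup Δ :=
  if h : (i, j) ∈ Δ then FreeGroup.of (⟨(i, j), h⟩ : Δ) else 1

/-- The triangle relations of the triangle group `𝕋_Δ`. -/
def triRels {n : ℕ} (Δ : Set (Fin n × Fin n)) : Set (FreeGroup Δ) :=
  { w | ∃ i j k : Fin n, i ≠ j ∧ i ≠ k ∧ j ≠ k ∧
      (i, j) ∈ Δ ∧ (j, i) ∈ Δ ∧ (i, k) ∈ Δ ∧ (k, i) ∈ Δ ∧ (j, k) ∈ Δ ∧ (k, j) ∈ Δ ∧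
      w = tF Δ i j * (tF Δ k j)⁻¹ * tF Δ k i *
        (tF Δ i k * (tF Δ j k)⁻¹ * tF Δ j i)⁻¹ }

/-- The triangle group `𝕋_Δ` of a triangulation `Δ`. -/
abbrev TriGroup {n : ℕ} (Δ : Set (Fin n × Fin n)) := PresentedGroup (triRels Δ)

/-- The generator `t_{ij} ∈ 𝕋_Δ` (junk value `1` when `(i,j) ∉ Δ`). -/
def tG {n : ℕ} (Δ : Set (Fin n × Fin n)) (i j : Fin n) : TriGroup Δ :=
  if h : (i, j) ∈ Δ then PresentedGroup.of (rels := triRels Δ) ⟨(i, j), h⟩ else 1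

/-! ### The big triangle group `𝕋_n` -/

def btF {n : ℕ} (i j : Fin n) : FreeGroup (OffD n) :=
  if h : i ≠ j then FreeGroup.of (⟨(i, j), h⟩ : OffD n) else 1

def bigRels (n : ℕ) : Set (FreeGroup (OffD n)) :=
  { w | ∃ i j k : Fin n, i ≠ j ∧ i ≠ k ∧ j ≠ k ∧
      w = btF i j * (btF k j)⁻¹ * btF k i * (btF i k * (btF j k)⁻¹ * btF j i)⁻¹ }

/-- The big triangle group `𝕋_n`. -/
abbrev BigTriGroup (n : ℕ) := PresentedGroup (bigRels n)

/-- The generator `t_{ij} ∈ 𝕋_n`. -/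
def bigT {n : ℕ} (i j : Fin n) : BigTriGroup n :=
  if h : i ≠ j then PresentedGroup.of (rels := bigRels n) ⟨(i, j), h⟩ else 1

/-! ### Distinguished subalgebras and subgroups -/

/-- `𝒜_Δ`: the subalgebra of `𝒜_n` generated by all `x_{ij}` together with the
`x_{ij}⁻¹` for `(i,j) ∈ Δ`. -/
def ADelta (n : ℕ) (Δ : Set (Fin n × Fin n)) : Subalgebra ℚ (NCPoly n) :=
  Algebra.adjoin ℚ
    ({a | ∃ i j : Fin n, i ≠ j ∧ a = X i j} ∪ {a | ∃ p ∈ Δ, a = Xinv p.1 p.2})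

/-- `𝒬_n`: the subalgebra of `𝒜_n` generated by the `y_{ij}^k = x_{ki}⁻¹ x_{kj}`. -/
def Qn (n : ℕ) : Subalgebra ℚ (NCPoly n) :=
  Algebra.adjoin ℚ
    {a : NCPoly n | ∃ i j k : Fin n, i ≠ j ∧ i ≠ k ∧ j ≠ k ∧ a = Xinv k i * X k j}

/-- `𝕌_Δ`: the subgroup of `𝕋_Δ` generated by the `u_{ij}^k = t_{ki}⁻¹ t_{kj}`. -/
def UDelta {n : ℕ} (Δ : Set (Fin n × Fin n)) : Subgroup (TriGroup Δ) :=
  Subgroup.closure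
    {g | ∃ i j k : Fin n, (k, i) ∈ Δ ∧ (k, j) ∈ Δ ∧ g = (tG Δ k i)⁻¹ * tG Δ k j}


/-! ### auxiliary -/

lemma csucc_val {n : ℕ} (k : Fin n) :
    (csucc k).1 = if k.1 + 1 = n then 0 else k.1 + 1 := by
  have hk := k.isLt
  rcases eq_or_ne (k.1+1) n with h | h
  · simp [csucc, h]
  · have : k.1 + 1 < n := by omega
    simp [csucc, Nat.mod_eq_of_lt this, h]

lemma cpred_val {n : ℕ} (k : Fin n) :
    (cpred k).1 = if k.1 = 0 then n - 1 else k.1 - 1 := by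
  have hk := k.isLt
  have hn : 1 ≤ n := by omega
  rcases Nat.eq_zero_or_pos k.1 with h | h
  · simp [cpred, h, Nat.mod_eq_of_lt (by omega : n - 1 < n)]
  · have h2 : k.1 + (n-1) = (k.1 - 1) + n := by omega
    have : (k.1 + (n-1)) % n = k.1 - 1 := by
      rw [h2, Nat.add_mod_right, Nat.mod_eq_of_lt (by omega)]
    simp [cpred, this, Nat.pos_iff_ne_zero.mp h]

lemma sorted4_iff {n : ℕ} (a b c d : Fin n) :
    ([a,b,c,d] : List (Fin n)).Pairwise (· < ·) ↔ a.1 < b.1 ∧ b.1 < c.1 ∧ c.1 < d.1 := by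
  simp only [List.Pairwise, List.pairwise_cons, List.mem_cons, List.mem_singleton,
    List.not_mem_nil, List.Pairwise.nil, forall_eq_or_imp, forall_eq, Fin.lt_def,
    false_implies, implies_true, and_true, true_and, List.Pairwise]
  constructor
  · intro h; omega
  · intro h; omega

lemma isCyclicSeq4_iff {n : ℕ} (a b c d : Fin n) :
    IsCyclicSeq [a,b,c,d] ↔
      (a.1 ≠ b.1 ∧ a.1 ≠ c.1 ∧ a.1 ≠ d.1 ∧ b.1 ≠ c.1 ∧ b.1 ≠ d.1 ∧ c.1 ≠ d.1) ∧
      ((a.1 < b.1 ∧ b.1 < c.1 ∧ c.1 < d.1) ∨ (b.1 < c.1 ∧ c.1 < d.1 ∧ d.1 < a.1) ∨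
       (c.1 < d.1 ∧ d.1 < a.1 ∧ a.1 < b.1) ∨ (d.1 < a.1 ∧ a.1 < b.1 ∧ b.1 < c.1)) := by
  have hnd : ([a,b,c,d] : List (Fin n)).Nodup ↔
      (a.1 ≠ b.1 ∧ a.1 ≠ c.1 ∧ a.1 ≠ d.1 ∧ b.1 ≠ c.1 ∧ b.1 ≠ d.1 ∧ c.1 ≠ d.1) := by
    simp [List.nodup_cons, Fin.ext_iff]
    tauto
  have e1 : ([a,b,c,d] : List (Fin n)).rotate 1 = [b,c,d,a] := by
    simp [List.rotate_cons_succ]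
  have e2 : ([a,b,c,d] : List (Fin n)).rotate 2 = [c,d,a,b] := by
    rw [show (2:ℕ) = 1+1 from rfl, ← List.rotate_rotate, e1]
    simp [List.rotate_cons_succ]
  have e3 : ([a,b,c,d] : List (Fin n)).rotate 3 = [d,a,b,c] := by
    rw [show (3:ℕ) = 2+1 from rfl, ← List.rotate_rotate, e2]
    simp [List.rotate_cons_succ]
  constructor
  · rintro ⟨h1, k, hk⟩
    refine ⟨hnd.1 h1, ?_⟩
    have hlen : ([a,b,c,d] : List (Fin n)).length = 4 := rfl
    rw [← List.rotate_mod, hlen] at hk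
    have h4 : k % 4 < 4 := Nat.mod_lt _ (by norm_num)
    set m := k % 4 with hm
    interval_cases m
    · rw [List.rotate_zero, sorted4_iff] at hk
      omega
    · rw [e1, sorted4_iff] at hk
      omega
    · rw [e2, sorted4_iff] at hk
      omega
    · rw [e3, sorted4_iff] at hk
      omega
  · rintro ⟨h1, h2⟩
    refine ⟨hnd.2 h1, ?_⟩
    rcases h2 with h | h | h | h
    · exact ⟨0, by rw [List.rotate_zero, sorted4_iff]; omega⟩
    · exact ⟨1, by rw [e1, sorted4_iff]; omega⟩
    · exact ⟨2, by rw [e2, sorted4_iff]; omega⟩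
    · exact ⟨3, by rw [e3, sorted4_iff]; omega⟩


/-! ### coordinates around a vertex -/

def odk (n k x : ℕ) : ℕ := if k < x then x - k - 1 else x + n - 1 - k

lemma cyc_rot1 {n : ℕ} {a b c d : Fin n} (h : IsCyclicSeq [a,b,c,d]) :
    IsCyclicSeq [b,c,d,a] := by
  rw [isCyclicSeq4_iff] at h ⊢; omega

lemma cyc_of_odk {n : ℕ} {p q r k : Fin n} (hr : r ≠ k)
    (h1 : odk n k.1 p.1 < odk n k.1 q.1) (h2 : odk n k.1 q.1 < odk n k.1 r.1) :
    IsCyclicSeq [p,q,r,k] := by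
  have hr' : r.1 ≠ k.1 := fun h => hr (Fin.ext h)
  have := p.isLt; have := q.isLt; have := r.isLt; have := k.isLt
  rw [isCyclicSeq4_iff]
  simp only [odk] at h1 h2
  split_ifs at h1 h2 <;> omega

lemma odk_of_cyc {n : ℕ} {x a y b k : Fin n} (hx : x ≠ k) (hy : y ≠ k)
    (hxy : odk n k.1 x.1 < odk n k.1 y.1) (h : IsCyclicSeq [x,a,y,b]) :
    (a ≠ k ∧ odk n k.1 x.1 < odk n k.1 a.1 ∧ odk n k.1 a.1 < odk n k.1 y.1) ∧
    (b = k ∨ odk n k.1 b.1 < odk n k.1 x.1 ∨ odk n k.1 y.1 < odk n k.1 b.1) := by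
  have hx' : x.1 ≠ k.1 := fun hh => hx (Fin.ext hh)
  have hy' : y.1 ≠ k.1 := fun hh => hy (Fin.ext hh)
  have := x.isLt; have := a.isLt; have := y.isLt; have := b.isLt; have := k.isLt
  rw [isCyclicSeq4_iff] at h
  simp only [ne_eq, Fin.ext_iff]
  simp only [odk] at hxy ⊢
  split_ifs at hxy ⊢ <;> omega

/-! ### basic facts about triangulations -/

section Tr

variable {n : ℕ} {Δ : Set (Fin n × Fin n)}

lemma mem_ne (hΔ : IsTriangulation Δ) {i j : Fin n} (h : (i,j) ∈ Δ) : i ≠ j :=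
  hΔ.1.1 (i,j) h

lemma nocross (hΔ : IsTriangulation Δ) {x y a b : Fin n} (h1 : (x,y) ∈ Δ)
    (h2 : (a,b) ∈ Δ) : ¬ IsCyclicSeq [x,a,y,b] :=
  hΔ.1.2 (x,y) h1 (a,b) h2

lemma exists_cross (hΔ : IsTriangulation Δ) {i j : Fin n} (hij : i ≠ j)
    (hnot : (i,j) ∉ Δ) :
    ∃ a b, ((a,b) ∈ Δ ∨ (b,a) ∈ Δ) ∧ IsCyclicSeq [i,a,j,b] := by
  set Δ' := insert (i,j) Δ with hΔ'
  have hnc : ¬ NonCrossing Δ' := by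
    intro h
    exact hnot (by rw [← hΔ.2 Δ' h (Set.subset_insert _ _)]; exact Set.mem_insert _ _)
  have hA : ∀ p ∈ Δ', p.1 ≠ p.2 := by
    rintro p hp
    rcases Set.mem_insert_iff.1 hp with rfl | hp
    · exact hij
    · exact hΔ.1.1 p hp
  have hB : ¬ ∀ p ∈ Δ', ∀ q ∈ Δ', ¬ Crosses p q := fun hB => hnc ⟨hA, hB⟩
  push_neg at hB
  obtain ⟨p, hp, q, hq, hc⟩ := hB
  rcases Set.mem_insert_iff.1 hp with rfl | hp <;>
    rcases Set.mem_insert_iff.1 hq with hq' | hq'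
  · rw [hq'] at hc
    rw [Crosses, isCyclicSeq4_iff] at hc
    omega
  · exact ⟨q.1, q.2, Or.inl hq', hc⟩
  · rw [hq'] at hc
    have hc' : IsCyclicSeq [p.1, i, p.2, j] := hc
    exact ⟨p.2, p.1, Or.inr (by simpa using hp), cyc_rot1 hc'⟩
  · exact absurd hc (hΔ.1.2 p hp q hq')

lemma mem_symm (hΔ : IsTriangulation Δ) {i j : Fin n} (h : (i,j) ∈ Δ) : (j,i) ∈ Δ := by
  by_contra hn
  obtain ⟨a, b, hab, hc⟩ := exists_cross hΔ (mem_ne hΔ h).symm hn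
  rcases hab with hab | hab
  · exact hΔ.1.2 (a,b) hab (i,j) h (cyc_rot1 hc)
  · exact hΔ.1.2 (i,j) h (b,a) hab (cyc_rot1 (cyc_rot1 hc))

lemma ne_csucc {n : ℕ} (hn : 3 ≤ n) (i : Fin n) : i ≠ csucc i := by
  have := i.isLt
  have h := csucc_val i
  intro he; rw [Fin.ext_iff, h] at he; split_ifs at he <;> omega

lemma mem_csucc (hn : 3 ≤ n) (hΔ : IsTriangulation Δ) (i : Fin n) : (i, csucc i) ∈ Δ := by
  by_contra hnot
  obtain ⟨a, b, -, hc⟩ := exists_cross hΔ (ne_csucc hn i) hnot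
  rw [isCyclicSeq4_iff] at hc
  have := i.isLt; have := a.isLt; have := b.isLt
  have h := csucc_val i
  rw [h] at hc
  split_ifs at hc <;> omega

lemma csucc_cpred {n : ℕ} (hn : 3 ≤ n) (i : Fin n) : csucc (cpred i) = i := by
  have := i.isLt
  have h1 := csucc_val (cpred i); have h2 := cpred_val i
  rw [Fin.ext_iff, h1, h2]
  split_ifs <;> omega

lemma mem_cpred (hn : 3 ≤ n) (hΔ : IsTriangulation Δ) (i : Fin n) : (i, cpred i) ∈ Δ := by
  have := mem_csucc hn hΔ (cpred i)
  rw [csucc_cpred hn] at this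
  exact mem_symm hΔ this

end Tr


/-! ### fans at a vertex -/

section Fan

variable {n : ℕ} {Δ : Set (Fin n × Fin n)}

lemma edge_gap (hΔ : IsTriangulation Δ) {k x y m : Fin n}
    (hky : (k,y) ∈ Δ) (hxy : (x,y) ∈ Δ) (hmem : (k,m) ∈ Δ)
    (h1 : odk n k.1 x.1 < odk n k.1 m.1) (h2 : odk n k.1 m.1 < odk n k.1 y.1) : False := by
  exact nocross hΔ hxy (mem_symm hΔ hmem)
    (cyc_of_odk (Ne.symm (mem_ne hΔ hky)) h1 h2)

lemma gap_edge (hΔ : IsTriangulation Δ) {k x y : Fin n}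
    (hkx : (k,x) ∈ Δ) (hky : (k,y) ∈ Δ)
    (hxy : odk n k.1 x.1 < odk n k.1 y.1)
    (hgap : ∀ m, (k,m) ∈ Δ →
      ¬(odk n k.1 x.1 < odk n k.1 m.1 ∧ odk n k.1 m.1 < odk n k.1 y.1)) :
    (x,y) ∈ Δ := by
  by_contra hnot
  have hxk : x ≠ k := Ne.symm (mem_ne hΔ hkx)
  have hyk : y ≠ k := Ne.symm (mem_ne hΔ hky)
  have hxyne : x ≠ y := by intro h; rw [h] at hxy; exact lt_irrefl _ hxy
  obtain ⟨a, b, hab, hc⟩ := exists_cross hΔ hxyne hnot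
  have hab' : (a,b) ∈ Δ := by
    rcases hab with h | h
    · exact h
    · exact mem_symm hΔ h
  obtain ⟨⟨hak, ha1, ha2⟩, hb⟩ := odk_of_cyc hxk hyk hxy hc
  by_cases hbk : b = k
  · subst hbk
    exact hgap a (mem_symm hΔ hab') ⟨ha1, ha2⟩
  · rcases hb with hb | hb | hb
    · exact hbk hb
    · exact nocross hΔ (mem_symm hΔ hkx) hab'
        (cyc_rot1 (cyc_of_odk hak hb ha1))
    · exact nocross hΔ hab' (mem_symm hΔ hky) (cyc_of_odk hbk ha2 hb)

lemma odk_csucc {n : ℕ} (hn : 3 ≤ n) (k : Fin n) : odk n k.1 (csucc k).1 = 0 := by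
  have := k.isLt
  rw [csucc_val, odk]
  split_ifs <;> omega

lemma odk_pos {n : ℕ} (hn : 3 ≤ n) {k j : Fin n} (h1 : j ≠ k) (h2 : j ≠ csucc k) :
    0 < odk n k.1 j.1 := by
  have := k.isLt; have := j.isLt
  have h1' : j.1 ≠ k.1 := fun h => h1 (Fin.ext h)
  have h2' : j.1 ≠ (csucc k).1 := fun h => h2 (Fin.ext h)
  rw [csucc_val] at h2'
  rw [odk]
  split_ifs at h2' ⊢ <;> omega

lemma odk_inj {n : ℕ} {k x y : Fin n} (h : odk n k.1 x.1 = odk n k.1 y.1) : x = y := by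
  have := k.isLt; have := x.isLt; have := y.isLt
  rw [odk, odk] at h
  rw [Fin.ext_iff]
  split_ifs at h <;> omega

def prvP {n : ℕ} (Δ : Set (Fin n × Fin n)) (k j i : Fin n) : Prop :=
  ((k,i) ∈ Δ ∧ odk n k.1 i.1 < odk n k.1 j.1) ∧
  ∀ m, (k,m) ∈ Δ → odk n k.1 m.1 < odk n k.1 j.1 → odk n k.1 m.1 ≤ odk n k.1 i.1

lemma exists_prv (hn : 3 ≤ n) (hΔ : IsTriangulation Δ) {k j : Fin n}
    (hkj : (k,j) ∈ Δ) (hj : j ≠ csucc k) : ∃ i, prvP Δ k j i := by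
  set S : Finset (Fin n) :=
    Finset.univ.filter (fun i => (k,i) ∈ Δ ∧ odk n k.1 i.1 < odk n k.1 j.1) with hSdef
  have hjpos : 0 < odk n k.1 j.1 := odk_pos hn (Ne.symm (mem_ne hΔ hkj)) hj
  have hS : S.Nonempty := by
    refine ⟨csucc k, ?_⟩
    simp only [hSdef, Finset.mem_filter, Finset.mem_univ, true_and]
    exact ⟨mem_csucc hn hΔ k, by rw [odk_csucc hn]; exact hjpos⟩
  obtain ⟨i, hiS, hmax⟩ := S.exists_max_image (fun i => odk n k.1 i.1) hS
  simp only [hSdef, Finset.mem_filter, Finset.mem_univ, true_and] at hiS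
  refine ⟨i, hiS, fun m hm hlt => ?_⟩
  refine hmax m ?_
  simp only [hSdef, Finset.mem_filter, Finset.mem_univ, true_and]
  exact ⟨hm, hlt⟩

noncomputable def prv {n : ℕ} (Δ : Set (Fin n × Fin n)) (k j : Fin n) : Fin n :=
  if h : ∃ i, prvP Δ k j i then Classical.choose h else k

lemma prv_spec (hn : 3 ≤ n) (hΔ : IsTriangulation Δ) {k j : Fin n}
    (hkj : (k,j) ∈ Δ) (hj : j ≠ csucc k) : prvP Δ k j (prv Δ k j) := by
  have h := exists_prv hn hΔ hkj hj
  rw [prv, dif_pos h]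
  exact Classical.choose_spec h

end Fan


/-! ### triangles and the free group -/

section TriSec

variable {n : ℕ}

def TriP (Δ : Set (Fin n × Fin n)) (t : Fin n × Fin n × Fin n) : Prop :=
  t.1 < t.2.1 ∧ t.2.1 < t.2.2 ∧ (t.1, t.2.1) ∈ Δ ∧ (t.1, t.2.2) ∈ Δ ∧ (t.2.1, t.2.2) ∈ Δ

def Tri (Δ : Set (Fin n × Fin n)) := {t : Fin n × Fin n × Fin n // TriP Δ t}

variable {Δ : Set (Fin n × Fin n)}

noncomputable def gAt (Δ : Set (Fin n × Fin n)) (k x y : Fin n) :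
    FreeGroup (Tri Δ × Bool) :=
  if h : TriP Δ (k,x,y) then FreeGroup.of (⟨(k,x,y),h⟩, false)
  else if h : TriP Δ (x,y,k) then
    (FreeGroup.of (⟨(x,y,k),h⟩, false) * FreeGroup.of (⟨(x,y,k),h⟩, true))⁻¹
  else if h : TriP Δ (y,k,x) then FreeGroup.of (⟨(y,k,x),h⟩, true)
  else 1

lemma prv_eq (hn : 3 ≤ n) (hΔ : IsTriangulation Δ) {k x y : Fin n}
    (hkx : (k,x) ∈ Δ) (hky : (k,y) ∈ Δ) (hxy : (x,y) ∈ Δ)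
    (hor : odk n k.1 x.1 < odk n k.1 y.1) : y ≠ csucc k ∧ prv Δ k y = x := by
  have hy : y ≠ csucc k := by
    intro h
    rw [h, odk_csucc hn] at hor
    omega
  obtain ⟨⟨hmem, hlt⟩, hmax⟩ := prv_spec hn hΔ hky hy
  have h1 : odk n k.1 x.1 ≤ odk n k.1 (prv Δ k y).1 := hmax x hkx hor
  rcases eq_or_lt_of_le h1 with h2 | h2
  · exact ⟨hy, (odk_inj h2).symm⟩
  · exact absurd (edge_gap hΔ hky hxy hmem h2 hlt) (by simp)

noncomputable def cW (Δ : Set (Fin n × Fin n)) (k j : Fin n) :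
    FreeGroup (Tri Δ × Bool) :=
  if h : (k,j) ∈ Δ ∧ j ≠ csucc k ∧ 3 ≤ n ∧ IsTriangulation Δ then
    cW Δ k (prv Δ k j) * gAt Δ k (prv Δ k j) j
  else 1
termination_by odk n k.1 j.1
decreasing_by
  exact (prv_spec h.2.2.1 h.2.2.2 h.1 h.2.1).1.2

lemma cW_csucc (k : Fin n) : cW Δ k (csucc k) = 1 := by
  rw [cW]
  simp

lemma cW_step (hn : 3 ≤ n) (hΔ : IsTriangulation Δ) {k x y : Fin n}
    (hkx : (k,x) ∈ Δ) (hky : (k,y) ∈ Δ) (hxy : (x,y) ∈ Δ)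
    (hor : odk n k.1 x.1 < odk n k.1 y.1) :
    cW Δ k y = cW Δ k x * gAt Δ k x y := by
  obtain ⟨hy, hp⟩ := prv_eq hn hΔ hkx hky hxy hor
  rw [cW, dif_pos ⟨hky, hy, hn, hΔ⟩, hp]

end TriSec


section TriStep

variable {n : ℕ} {Δ : Set (Fin n × Fin n)}

lemma odk_lt_1 {n u v w : ℕ} (h1 : u < v) (h2 : v < w) (h3 : w < n) :
    odk n u v < odk n u w := by simp only [odk]; split_ifs <;> omega

lemma odk_lt_2 {n u v w : ℕ} (h1 : u < v) (h2 : v < w) (h3 : w < n) :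
    odk n v w < odk n v u := by simp only [odk]; split_ifs <;> omega

lemma odk_lt_3 {n u v w : ℕ} (h1 : u < v) (h2 : v < w) (h3 : w < n) :
    odk n w u < odk n w v := by simp only [odk]; split_ifs <;> omega

lemma gAt_v1 {k x y : Fin n} (h : TriP Δ (k,x,y)) :
    gAt Δ k x y = FreeGroup.of ((⟨(k,x,y),h⟩ : Tri Δ), false) := by
  rw [gAt, dif_pos h]
  rfl

lemma gAt_v3 {k x y : Fin n} (h : TriP Δ (x,y,k)) :
    gAt Δ k x y =
      (FreeGroup.of ((⟨(x,y,k),h⟩ : Tri Δ), false) *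
        FreeGroup.of ((⟨(x,y,k),h⟩ : Tri Δ), true))⁻¹ := by
  have hxy : x < y := h.1
  have hyk : y < k := h.2.1
  rw [gAt, dif_neg, dif_pos h]
  rfl
  intro hh
  have hkx : k < x := hh.1
  exact absurd ((hkx.trans hxy).trans hyk) (lt_irrefl k)

lemma gAt_v2 {k x y : Fin n} (h : TriP Δ (y,k,x)) :
    gAt Δ k x y = FreeGroup.of ((⟨(y,k,x),h⟩ : Tri Δ), true) := by
  have hyk : y < k := h.1
  have hkx : k < x := h.2.1
  rw [gAt, dif_neg, dif_neg, dif_pos h]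
  · rfl
  · intro hh
    have hxy : x < y := hh.1
    exact absurd ((hxy.trans hyk).trans hkx) (lt_irrefl x)
  · intro hh
    have hxy : x < y := hh.2.1
    exact absurd ((hxy.trans hyk).trans hkx) (lt_irrefl x)

lemma cW_T1 (hn : 3 ≤ n) (hΔ : IsTriangulation Δ) (T : Tri Δ) :
    cW Δ T.1.1 T.1.2.2 = cW Δ T.1.1 T.1.2.1 * FreeGroup.of (T, false) := by
  obtain ⟨h1, h2, m12, m13, m23⟩ := T.2
  rw [cW_step hn hΔ m12 m13 m23 (odk_lt_1 h1 h2 T.1.2.2.isLt)]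
  rw [gAt_v1 (show TriP Δ (T.1.1, T.1.2.1, T.1.2.2) from ⟨h1, h2, m12, m13, m23⟩)]
  rfl

lemma cW_T2 (hn : 3 ≤ n) (hΔ : IsTriangulation Δ) (T : Tri Δ) :
    cW Δ T.1.2.1 T.1.1 = cW Δ T.1.2.1 T.1.2.2 * FreeGroup.of (T, true) := by
  obtain ⟨h1, h2, m12, m13, m23⟩ := T.2
  rw [cW_step hn hΔ m23 (mem_symm hΔ m12) (mem_symm hΔ m13)
    (odk_lt_2 h1 h2 T.1.2.2.isLt)]
  rw [gAt_v2 (show TriP Δ (T.1.1, T.1.2.1, T.1.2.2) from ⟨h1, h2, m12, m13, m23⟩)]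
  rfl

lemma cW_T3 (hn : 3 ≤ n) (hΔ : IsTriangulation Δ) (T : Tri Δ) :
    cW Δ T.1.2.2 T.1.2.1 = cW Δ T.1.2.2 T.1.1 *
      (FreeGroup.of (T, false) * FreeGroup.of (T, true))⁻¹ := by
  obtain ⟨h1, h2, m12, m13, m23⟩ := T.2
  rw [cW_step hn hΔ (mem_symm hΔ m13) (mem_symm hΔ m23) m12
    (odk_lt_3 h1 h2 T.1.2.2.isLt)]
  rw [gAt_v3 (show TriP Δ (T.1.1, T.1.2.1, T.1.2.2) from ⟨h1, h2, m12, m13, m23⟩)]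
  rfl

end TriStep


section GroupSec

variable {n : ℕ} {Δ : Set (Fin n × Fin n)}

lemma mk_tF {i j : Fin n} (h : (i,j) ∈ Δ) :
    PresentedGroup.mk (triRels Δ) (tF Δ i j) = tG Δ i j := by
  rw [tF, dif_pos h, tG, dif_pos h]
  rfl

lemma trel (hΔ : IsTriangulation Δ) {a b c : Fin n}
    (hab : a ≠ b) (hac : a ≠ c) (hbc : b ≠ c)
    (m1 : (a,b) ∈ Δ) (m2 : (a,c) ∈ Δ) (m3 : (b,c) ∈ Δ) :
    tG Δ a b * (tG Δ c b)⁻¹ * tG Δ c a = tG Δ a c * (tG Δ b c)⁻¹ * tG Δ b a := by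
  have hrel : (tF Δ a b * (tF Δ c b)⁻¹ * tF Δ c a *
      (tF Δ a c * (tF Δ b c)⁻¹ * tF Δ b a)⁻¹) ∈ triRels Δ :=
    ⟨a, b, c, hab, hac, hbc, m1, mem_symm hΔ m1, m2, mem_symm hΔ m2, m3,
      mem_symm hΔ m3, rfl⟩
  have h1 : PresentedGroup.mk (triRels Δ) (tF Δ a b * (tF Δ c b)⁻¹ * tF Δ c a *
      (tF Δ a c * (tF Δ b c)⁻¹ * tF Δ b a)⁻¹) = 1 :=
    (QuotientGroup.eq_one_iff _).2 (Subgroup.subset_normalClosure hrel)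
  simp only [map_mul, map_inv, mk_tF m1, mk_tF m2, mk_tF m3, mk_tF (mem_symm hΔ m1),
    mk_tF (mem_symm hΔ m2), mk_tF (mem_symm hΔ m3)] at h1
  exact mul_inv_eq_one.1 h1

/-- The image map of generators. -/
noncomputable def phiGen (Δ : Set (Fin n × Fin n)) (x : Tri Δ × Bool) : TriGroup Δ :=
  if x.2 then (tG Δ x.1.1.2.1 x.1.1.2.2)⁻¹ * tG Δ x.1.1.2.1 x.1.1.1
  else (tG Δ x.1.1.1 x.1.1.2.1)⁻¹ * tG Δ x.1.1.1 x.1.1.2.2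

noncomputable def phi (Δ : Set (Fin n × Fin n)) :
    FreeGroup (Tri Δ × Bool) →* TriGroup Δ :=
  FreeGroup.lift (phiGen Δ)

lemma permA {G : Type*} [Group G] {p q r s t u : G} (h : p*q⁻¹*r = s*t⁻¹*u) :
    u*r⁻¹*q = t*s⁻¹*p := by
  have hr : r = q * p⁻¹ * (s * t⁻¹ * u) := by rw [← h]; group
  rw [hr]; group

lemma permB {G : Type*} [Group G] {p q r s t u : G} (h : p*q⁻¹*r = s*t⁻¹*u) :
    r*u⁻¹*t = q*p⁻¹*s := by
  have hr : r = q * p⁻¹ * (s * t⁻¹ * u) := by rw [← h]; group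
  rw [hr]; group

lemma cW_sorted (hn : 3 ≤ n) (hΔ : IsTriangulation Δ) (T : Tri Δ) :
    cW Δ T.1.1 T.1.2.1 * (cW Δ T.1.2.2 T.1.2.1)⁻¹ * cW Δ T.1.2.2 T.1.1 =
    cW Δ T.1.1 T.1.2.2 * (cW Δ T.1.2.1 T.1.2.2)⁻¹ * cW Δ T.1.2.1 T.1.1 := by
  rw [cW_T1 hn hΔ T, cW_T2 hn hΔ T, cW_T3 hn hΔ T]
  group

lemma cW_rel (hn : 3 ≤ n) (hΔ : IsTriangulation Δ) {i j k : Fin n}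
    (hij : i ≠ j) (hik : i ≠ k) (hjk : j ≠ k)
    (m1 : (i,j) ∈ Δ) (m2 : (i,k) ∈ Δ) (m3 : (j,k) ∈ Δ) :
    cW Δ i j * (cW Δ k j)⁻¹ * cW Δ k i = cW Δ i k * (cW Δ j k)⁻¹ * cW Δ j i := by
  have hS : ∀ a b c : Fin n, a < b → b < c → (a,b) ∈ Δ → (a,c) ∈ Δ → (b,c) ∈ Δ →
      cW Δ a b * (cW Δ c b)⁻¹ * cW Δ c a = cW Δ a c * (cW Δ b c)⁻¹ * cW Δ b a := by
    intro a b c h1 h2 e1 e2 e3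
    exact cW_sorted hn hΔ ⟨(a,b,c), h1, h2, e1, e2, e3⟩
  rcases lt_trichotomy i j with h1 | h1 | h1
  · rcases lt_trichotomy j k with h2 | h2 | h2
    · exact hS i j k h1 h2 m1 m2 m3
    · exact absurd h2 (by simp [hjk])
    · rcases lt_trichotomy i k with h3 | h3 | h3
      · exact (hS i k j h3 h2 m2 m1 (mem_symm hΔ m3)).symm
      · exact absurd h3 (by simp [hik])
      · exact (permA (hS k i j h3 h1 (mem_symm hΔ m2) (mem_symm hΔ m3) m1)).symm
  · exact absurd h1 (by simp [hij])
  · rcases lt_trichotomy i k with h2 | h2 | h2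
    · exact permA (hS j i k h1 h2 (mem_symm hΔ m1) m3 m2)
    · exact absurd h2 (by simp [hik])
    · rcases lt_trichotomy j k with h3 | h3 | h3
      · exact permB (hS j k i h3 h2 m3 (mem_symm hΔ m1) (mem_symm hΔ m2))
      · exact absurd h3 (by simp [hjk])
      · exact (permB (hS k j i h3 h1 (mem_symm hΔ m3) (mem_symm hΔ m2) (mem_symm hΔ m1))).symm

lemma lift_tF {f : Δ → FreeGroup (Tri Δ × Bool)} {i j : Fin n} (h : (i,j) ∈ Δ) :
    FreeGroup.lift f (tF Δ i j) = f ⟨(i,j),h⟩ := by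
  rw [tF, dif_pos h, FreeGroup.lift_apply_of]

lemma relcheck (hn : 3 ≤ n) (hΔ : IsTriangulation Δ) :
    ∀ r ∈ triRels Δ,
      FreeGroup.lift (fun p : Δ => cW Δ p.1.1 p.1.2) r = 1 := by
  rintro r ⟨i, j, k, hij, hik, hjk, h1, h2, h3, h4, h5, h6, rfl⟩
  simp only [map_mul, map_inv, lift_tF h1, lift_tF h2, lift_tF h3, lift_tF h4,
    lift_tF h5, lift_tF h6]
  rw [mul_inv_eq_one]
  exact cW_rel hn hΔ hij hik hjk h1 h3 h5

noncomputable def psi (hn : 3 ≤ n) (hΔ : IsTriangulation Δ) :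
    TriGroup Δ →* FreeGroup (Tri Δ × Bool) :=
  PresentedGroup.toGroup (relcheck hn hΔ)

lemma psi_tG (hn : 3 ≤ n) (hΔ : IsTriangulation Δ) {i j : Fin n} (h : (i,j) ∈ Δ) :
    psi hn hΔ (tG Δ i j) = cW Δ i j := by
  rw [tG, dif_pos h, psi, PresentedGroup.toGroup.of]

end GroupSec


section Tele

variable {n : ℕ} {Δ : Set (Fin n × Fin n)}

lemma permC {G : Type*} [Group G] {p q r s t u : G} (h : p*q⁻¹*r = s*t⁻¹*u) :
    (p⁻¹*s*(t⁻¹*u))⁻¹ = r⁻¹*q := by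
  have hr : r = q * p⁻¹ * (s * t⁻¹ * u) := by rw [← h]; group
  rw [hr]; group

lemma phi_of (z : Tri Δ × Bool) : phi Δ (FreeGroup.of z) = phiGen Δ z := by
  rw [phi, FreeGroup.lift_apply_of]

lemma phi_gAt (hn : 3 ≤ n) (hΔ : IsTriangulation Δ) {k x y : Fin n}
    (hkx : (k,x) ∈ Δ) (hky : (k,y) ∈ Δ) (hxy : (x,y) ∈ Δ)
    (hor : odk n k.1 x.1 < odk n k.1 y.1) :
    phi Δ (gAt Δ k x y) = (tG Δ k x)⁻¹ * tG Δ k y := by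
  have hkx' : k ≠ x := mem_ne hΔ hkx
  have hky' : k ≠ y := mem_ne hΔ hky
  have hxy' : x ≠ y := mem_ne hΔ hxy
  have hkx'' : k.1 ≠ x.1 := fun h => hkx' (Fin.ext h)
  have hky'' : k.1 ≠ y.1 := fun h => hky' (Fin.ext h)
  have hxy'' : x.1 ≠ y.1 := fun h => hxy' (Fin.ext h)
  have := k.isLt; have := x.isLt; have := y.isLt
  have hcase : (k < x ∧ x < y) ∨ (x < y ∧ y < k) ∨ (y < k ∧ k < x) := by
    simp only [Fin.lt_def]
    simp only [odk] at hor
    split_ifs at hor <;> omega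
  rcases hcase with ⟨h1, h2⟩ | ⟨h1, h2⟩ | ⟨h1, h2⟩
  · have hT : TriP Δ (k,x,y) := ⟨h1, h2, hkx, hky, hxy⟩
    rw [gAt_v1 hT]
    erw [phi_of]
    rfl
  · have hT : TriP Δ (x,y,k) := ⟨h1, h2, hxy, mem_symm hΔ hkx, mem_symm hΔ hky⟩
    rw [gAt_v3 hT]
    erw [map_inv, map_mul, phi_of, phi_of]
    have h := trel hΔ hxy' (Ne.symm hkx') (Ne.symm hky') hxy
      (mem_symm hΔ hkx) (mem_symm hΔ hky)
    exact permC h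
  · have hT : TriP Δ (y,k,x) := ⟨h1, h2, mem_symm hΔ hky, mem_symm hΔ hxy, hkx⟩
    rw [gAt_v2 hT]
    erw [phi_of]
    rfl

lemma tele (hn : 3 ≤ n) (hΔ : IsTriangulation Δ) (k : Fin n) :
    ∀ m, ∀ j : Fin n, odk n k.1 j.1 ≤ m → (k,j) ∈ Δ →
      tG Δ k j = tG Δ k (csucc k) * phi Δ (cW Δ k j) := by
  intro m
  induction m with
  | zero =>
    intro j hj hmem
    have hjc : j = csucc k := by
      by_contra h
      have := odk_pos hn (Ne.symm (mem_ne hΔ hmem)) h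
      omega
    subst hjc
    rw [cW_csucc, map_one, mul_one]
  | succ m ih =>
    intro j hj hmem
    by_cases hc : j = csucc k
    · subst hc
      rw [cW_csucc, map_one, mul_one]
    · obtain ⟨⟨hkx, hlt⟩, hmax⟩ := prv_spec hn hΔ hmem hc
      set x := prv Δ k j with hx
      have hedge : (x, j) ∈ Δ := by
        refine gap_edge hΔ hkx hmem hlt (fun m' hm' hbet => ?_)
        have := hmax m' hm' hbet.2
        omega
      have hAng := phi_gAt hn hΔ hkx hmem hedge hlt
      rw [cW, dif_pos ⟨hmem, hc, hn, hΔ⟩, ← hx, map_mul, ← mul_assoc,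
        ← ih x (by omega) hkx, hAng]
      group

lemma psi_phi (hn : 3 ≤ n) (hΔ : IsTriangulation Δ) :
    (psi hn hΔ).comp (phi Δ) = MonoidHom.id _ := by
  refine FreeGroup.ext_hom _ _ fun z => ?_
  obtain ⟨T, b⟩ := z
  obtain ⟨h1, h2, m12, m13, m23⟩ := T.2
  cases b
  · have : (psi hn hΔ).comp (phi Δ) (FreeGroup.of (T, false)) =
        (cW Δ T.1.1 T.1.2.1)⁻¹ * cW Δ T.1.1 T.1.2.2 := by
      rw [MonoidHom.comp_apply, phi_of]
      show psi hn hΔ ((tG Δ T.1.1 T.1.2.1)⁻¹ * tG Δ T.1.1 T.1.2.2) = _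
      rw [map_mul, map_inv, psi_tG hn hΔ m12, psi_tG hn hΔ m13]
    rw [this, cW_T1 hn hΔ T]
    simp
  · have : (psi hn hΔ).comp (phi Δ) (FreeGroup.of (T, true)) =
        (cW Δ T.1.2.1 T.1.2.2)⁻¹ * cW Δ T.1.2.1 T.1.1 := by
      rw [MonoidHom.comp_apply, phi_of]
      show psi hn hΔ ((tG Δ T.1.2.1 T.1.2.2)⁻¹ * tG Δ T.1.2.1 T.1.1) = _
      rw [map_mul, map_inv, psi_tG hn hΔ m23, psi_tG hn hΔ (mem_symm hΔ m12)]
    rw [this, cW_T2 hn hΔ T]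
    simp

lemma phi_inj (hn : 3 ≤ n) (hΔ : IsTriangulation Δ) : Function.Injective (phi Δ) := by
  intro a b hab
  have ha := DFunLike.congr_fun (psi_phi hn hΔ) a
  have hb := DFunLike.congr_fun (psi_phi hn hΔ) b
  simp only [MonoidHom.comp_apply, MonoidHom.id_apply] at ha hb
  rw [← ha, ← hb, hab]

lemma phi_range (hn : 3 ≤ n) (hΔ : IsTriangulation Δ) :
    (phi Δ).range = UDelta Δ := by
  apply le_antisymm
  · rintro g ⟨w, rfl⟩
    induction w using FreeGroup.induction_on with
    | C1 => exact one_mem _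
    | of z =>
      obtain ⟨T, b⟩ := z
      obtain ⟨h1, h2, m12, m13, m23⟩ := T.2
      cases b
      · rw [phi_of]
        exact Subgroup.subset_closure ⟨T.1.2.1, T.1.2.2, T.1.1, m12, m13, rfl⟩
      · rw [phi_of]
        exact Subgroup.subset_closure ⟨T.1.2.2, T.1.1, T.1.2.1, m23, mem_symm hΔ m12, rfl⟩
    | inv_of z hz => rw [map_inv]; exact inv_mem hz
    | mul w₁ w₂ hw₁ hw₂ => rw [map_mul]; exact mul_mem hw₁ hw₂
  · rw [UDelta, Subgroup.closure_le]
    rintro g ⟨i, j, k, h1, h2, rfl⟩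
    refine ⟨(cW Δ k i)⁻¹ * cW Δ k j, ?_⟩
    rw [map_mul, map_inv,
      show tG Δ k i = tG Δ k (csucc k) * phi Δ (cW Δ k i) from tele hn hΔ k _ i le_rfl h1,
      show tG Δ k j = tG Δ k (csucc k) * phi Δ (cW Δ k j) from tele hn hΔ k _ j le_rfl h2]
    group

end Tele


/-! ### counting triangles -/

section Count

variable {n : ℕ} {Δ : Set (Fin n × Fin n)}

lemma tri_max (hΔ : IsTriangulation Δ) (T : Tri Δ) {m : Fin n}
    (hm : (T.1.2.1, m) ∈ Δ) (h : T.1.2.1 < m) : m ≤ T.1.2.2 := by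
  obtain ⟨h1, h2, m12, m13, m23⟩ := T.2
  by_contra hgt
  push_neg at hgt
  have h1' : T.1.1.1 < T.1.2.1.1 := h1
  have h2' : T.1.2.1.1 < T.1.2.2.1 := h2
  have hj : T.1.2.1.1 < m.1 := h
  have hk : T.1.2.2.1 < m.1 := hgt
  have := m.isLt; have := T.1.1.isLt
  refine edge_gap hΔ (k := T.1.2.1) (x := T.1.2.2) (y := T.1.1) (m := m)
    (mem_symm hΔ m12) (mem_symm hΔ m13) hm ?_ ?_ <;>
    (simp only [odk]; split_ifs <;> omega)

lemma tri_min (hΔ : IsTriangulation Δ) (T : Tri Δ) {m : Fin n}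
    (hm : (T.1.2.1, m) ∈ Δ) (h : m < T.1.2.1) : T.1.1 ≤ m := by
  obtain ⟨h1, h2, m12, m13, m23⟩ := T.2
  by_contra hlt
  push_neg at hlt
  have h1' : T.1.1.1 < T.1.2.1.1 := h1
  have h2' : T.1.2.1.1 < T.1.2.2.1 := h2
  have hj : m.1 < T.1.2.1.1 := h
  have hk : m.1 < T.1.1.1 := hlt
  have := m.isLt; have := T.1.2.2.isLt
  refine edge_gap hΔ (k := T.1.2.1) (x := T.1.2.2) (y := T.1.1) (m := m)
    (mem_symm hΔ m12) (mem_symm hΔ m13) hm ?_ ?_ <;>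
    (simp only [odk]; split_ifs <;> omega)

noncomputable def midMap (Δ : Set (Fin n × Fin n)) (T : Tri Δ) : Fin (n - 2) :=
  ⟨T.1.2.1.1 - 1, by
    have h1 : T.1.1.1 < T.1.2.1.1 := T.2.1
    have h2 : T.1.2.1.1 < T.1.2.2.1 := T.2.2.1
    have := T.1.2.2.isLt
    omega⟩

lemma midMap_inj (hΔ : IsTriangulation Δ) : Function.Injective (midMap Δ) := by
  intro T T' hTT
  have hmid : T.1.2.1 = T'.1.2.1 := by
    have h1 : T.1.1.1 < T.1.2.1.1 := T.2.1
    have h1' : T'.1.1.1 < T'.1.2.1.1 := T'.2.1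
    have := congrArg Fin.val hTT
    simp only [midMap] at this
    exact Fin.ext (by omega)
  obtain ⟨h1, h2, m12, m13, m23⟩ := T.2
  obtain ⟨h1', h2', m12', m13', m23'⟩ := T'.2
  have hv3 : T.1.2.2 = T'.1.2.2 := by
    refine le_antisymm ?_ ?_
    · refine tri_max hΔ T' (m := T.1.2.2) ?_ ?_
      · rw [← hmid]; exact m23
      · rw [← hmid]; exact h2
    · refine tri_max hΔ T (m := T'.1.2.2) ?_ ?_
      · rw [hmid]; exact m23'
      · rw [hmid]; exact h2'
  have hv1 : T.1.1 = T'.1.1 := by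
    refine le_antisymm ?_ ?_
    · refine tri_min hΔ T (m := T'.1.1) ?_ ?_
      · rw [hmid]; exact mem_symm hΔ m12'
      · rw [hmid]; exact h1'
    · refine tri_min hΔ T' (m := T.1.1) ?_ ?_
      · rw [← hmid]; exact mem_symm hΔ m12
      · rw [← hmid]; exact h1
  apply Subtype.ext
  have e1 : T.1 = (T.1.1, T.1.2.1, T.1.2.2) := rfl
  have e2 : T'.1 = (T'.1.1, T'.1.2.1, T'.1.2.2) := rfl
  rw [e1, e2, hv1, hmid, hv3]

lemma midMap_surj (hn : 3 ≤ n) (hΔ : IsTriangulation Δ) :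
    Function.Surjective (midMap Δ) := by
  intro m
  have hm := m.isLt
  obtain ⟨j, hjval⟩ : ∃ j : Fin n, j.1 = m.1 + 1 := ⟨⟨m.1 + 1, by omega⟩, rfl⟩
  -- upper neighbours
  set U : Finset (Fin n) := Finset.univ.filter (fun x => (j, x) ∈ Δ ∧ j < x) with hU
  have hUne : U.Nonempty := by
    refine ⟨csucc j, ?_⟩
    simp only [hU, Finset.mem_filter, Finset.mem_univ, true_and]
    refine ⟨mem_csucc hn hΔ j, ?_⟩
    rw [Fin.lt_def, csucc_val]
    split_ifs <;> omega
  obtain ⟨k, hkU, hkmax⟩ := U.exists_max_image (fun x => x.1) hUne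
  simp only [hU, Finset.mem_filter, Finset.mem_univ, true_and] at hkU
  set L : Finset (Fin n) := Finset.univ.filter (fun x => (j, x) ∈ Δ ∧ x < j) with hL
  have hLne : L.Nonempty := by
    refine ⟨cpred j, ?_⟩
    simp only [hL, Finset.mem_filter, Finset.mem_univ, true_and]
    refine ⟨mem_cpred hn hΔ j, ?_⟩
    rw [Fin.lt_def, cpred_val]
    split_ifs <;> omega
  obtain ⟨i, hiL, himin⟩ := L.exists_min_image (fun x => x.1) hLne
  simp only [hL, Finset.mem_filter, Finset.mem_univ, true_and] at hiL
  have hjk : j.1 < k.1 := hkU.2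
  have hij : i.1 < j.1 := hiL.2
  have hkn := k.isLt; have hin := i.isLt
  have hedge : (k, i) ∈ Δ := by
    refine gap_edge hΔ hkU.1 hiL.1 ?_ (fun m' hm' hbet => ?_)
    · simp only [odk]; split_ifs <;> omega
    · have hm'j : m' ≠ j := Ne.symm (mem_ne hΔ hm')
      have hm'j' : m'.1 ≠ j.1 := fun h => hm'j (Fin.ext h)
      have hm'n := m'.isLt
      obtain ⟨hb1, hb2⟩ := hbet
      simp only [odk] at hb1 hb2
      rcases lt_or_gt_of_ne hm'j' with hlt | hgt
      · have : i.1 ≤ m'.1 := himin m' (by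
          simp only [hL, Finset.mem_filter, Finset.mem_univ, true_and]
          exact ⟨hm', hlt⟩)
        split_ifs at hb1 hb2 <;> omega
      · have : m'.1 ≤ k.1 := hkmax m' (by
          simp only [hU, Finset.mem_filter, Finset.mem_univ, true_and]
          exact ⟨hm', hgt⟩)
        split_ifs at hb1 hb2 <;> omega
  refine ⟨⟨(i, j, k), hij, hjk, mem_symm hΔ hiL.1, mem_symm hΔ hedge, hkU.1⟩, ?_⟩
  simp only [midMap]
  exact Fin.ext (by simp [hjval])

noncomputable def midEquiv (hn : 3 ≤ n) (hΔ : IsTriangulation Δ) : Tri Δ ≃ Fin (n - 2) :=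
  Equiv.ofBijective (midMap Δ) ⟨midMap_inj hΔ, midMap_surj hn hΔ⟩

end Count


/-- For `n ≥ 3` and a triangulation `Δ` of `[n]`, the subgroup `𝕌_Δ`
of `𝕋_Δ` is isomorphic to the free group on `2n - 4` generators. -/
theorem UDelta_free (n : ℕ) (hn : 3 ≤ n) (Δ : Set (Fin n × Fin n))
    (hΔ : IsTriangulation Δ) :
    Nonempty (UDelta Δ ≃* FreeGroup (Fin (2 * n - 4))) := by
  have e1 : FreeGroup (Tri Δ × Bool) ≃* (phi Δ).range :=
    MonoidHom.ofInjective (phi_inj hn hΔ)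
  have e2 : (phi Δ).range ≃* UDelta Δ := MulEquiv.subgroupCongr (phi_range hn hΔ)
  have e3 : Tri Δ × Bool ≃ Fin (2 * n - 4) :=
    (Equiv.prodCongr (midEquiv hn hΔ) finTwoEquiv.symm).trans
      (finProdFinEquiv.trans (finCongr (by omega)))
  exact ⟨((e1.trans e2).symm).trans (FreeGroup.freeGroupCongr e3)⟩


end NCPolygon
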